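/- If a subset G of ℕ^ℕ is dominating, then G (with the subspace topology from the product topology) is not Menger. -/

import Mathlib

def IsMenger (X : Type*) [TopologicalSpace X] : Prop :=
  ∀ U : ℕ → Set (Set X),
    (∀ n, ∀ s ∈ U n, IsOpen s) → (∀ n, ⋃₀ U n = Set.univ) →
    ∃ V : ℕ → Set (Set X), (∀ n, V n ⊆ U n) ∧ (∀ n, (V n).Finite) ∧
      (⋃ n, ⋃₀ V n) = Set.univ

def Dominating (G : Set (ℕ → ℕ)) : Prop :=
  ∀ f : ℕ → ℕ, ∃ g ∈ G, ∀ᶠ n in Filter.atTop, f n ≤ g n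

lemma left_le_pair' (a b : ℕ) : a ≤ Nat.pair a b := by
  unfold Nat.pair
  split
  · exact Nat.le_add_left a (b * b)
  · have : a ≤ a * a + a := Nat.le_add_left a (a * a)
    omega

theorem dominating_not_menger (G : Set (ℕ → ℕ)) (hG : Dominating G) :
    ¬ IsMenger G := by
  intro hM
  have hsel : ∀ N : ℕ, ∃ V : ℕ → Set (Set ↥G),
      (∀ m, V m ⊆ {C | ∃ k : ℕ, C = {x : ↥G | (x : ℕ → ℕ) (Nat.pair N m) ≤ k}}) ∧
      (∀ m, (V m).Finite) ∧ (⋃ m, ⋃₀ V m) = Set.univ := by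
    intro N
    apply hM (fun m => {C | ∃ k : ℕ, C = {x : ↥G | (x : ℕ → ℕ) (Nat.pair N m) ≤ k}})
    · intro m s hs
      obtain ⟨k, rfl⟩ := hs
      have hc : Continuous fun x : ↥G => (x : ℕ → ℕ) (Nat.pair N m) :=
        (continuous_apply _).comp continuous_subtype_val
      exact IsOpen.preimage hc (isOpen_discrete (Set.Iic k))
    · intro m
      ext x
      simp only [Set.mem_sUnion, Set.mem_univ, iff_true, Set.mem_setOf_eq]
      exact ⟨_, ⟨(x : ℕ → ℕ) (Nat.pair N m), rfl⟩, Set.mem_setOf.mpr le_rfl⟩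
  choose V hVsub hVfin hVcov using hsel
  set K : ℕ → ℕ := fun n =>
    ((hVfin n.unpair.1 n.unpair.2).toFinset).sup
      (fun C => sInf {k | ∀ x ∈ C, (x : ℕ → ℕ) n ≤ k}) with hK
  obtain ⟨g, hgG, hev⟩ := hG (fun n => K n + 1)
  obtain ⟨N₀, hN₀⟩ := Filter.eventually_atTop.mp hev
  have hx : (⟨g, hgG⟩ : ↥G) ∈ ⋃ m, ⋃₀ V N₀ m := by rw [hVcov]; trivial
  obtain ⟨_, ⟨m, rfl⟩, C, hCV, hxC⟩ := hx
  obtain ⟨k, hCk⟩ := hVsub N₀ m hCV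
  have hne : ({k' | ∀ x ∈ C, (x : ℕ → ℕ) (Nat.pair N₀ m) ≤ k'}).Nonempty := by
    refine ⟨k, fun x hxm => ?_⟩
    rw [hCk] at hxm
    exact hxm
  have h1 : g (Nat.pair N₀ m) ≤
      sInf {k' | ∀ x ∈ C, (x : ℕ → ℕ) (Nat.pair N₀ m) ≤ k'} :=
    Nat.sInf_mem hne ⟨g, hgG⟩ hxC
  have hmem : C ∈ (hVfin (Nat.pair N₀ m).unpair.1 (Nat.pair N₀ m).unpair.2).toFinset := by
    rw [Set.Finite.mem_toFinset]
    simp only [Nat.unpair_pair]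
    exact hCV
  have h2 : sInf {k' | ∀ x ∈ C, (x : ℕ → ℕ) (Nat.pair N₀ m) ≤ k'} ≤ K (Nat.pair N₀ m) := by
    rw [hK]
    exact Finset.le_sup
      (f := fun C : Set ↥G => sInf {k | ∀ x ∈ C, (x : ℕ → ℕ) (Nat.pair N₀ m) ≤ k}) hmem
  have h3 : N₀ ≤ Nat.pair N₀ m := left_le_pair' N₀ m
  have h4 := hN₀ (Nat.pair N₀ m) h3
  omega
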